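/- Define ρ(x) = ϑ(x) − x. Then ∑_{n ≤ x} ρ(n)/n² = O(1), i.e., the partial sums ∑_{n ≤ x} (ϑ(n) − n)/n² are bounded uniformly in x. -/

import Mathlib

open Finset Filter Real Asymptotics

noncomputable def primesUpTo (x : ℝ) : Finset ℕ := (Finset.Icc 1 ⌊x⌋₊).filter Nat.Prime

noncomputable def cheTheta (x : ℝ) : ℝ := ∑ p ∈ primesUpTo x, Real.log p

noncomputable def chePsi (x : ℝ) : ℝ := ∑ n ∈ Finset.Icc 1 ⌊x⌋₊, ArithmeticFunction.vonMangoldt n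

noncomputable def primePi (x : ℝ) : ℕ := (primesUpTo x).card

noncomputable def selTheta (x : ℝ) (n : ℕ) : ℝ :=
  ∑ d ∈ n.divisors, (ArithmeticFunction.moebius d : ℝ) * (Real.log (x / d)) ^ 2

open ArithmeticFunction

lemma theta_le' (N : ℕ) : ∑ p ∈ (Icc 1 N).filter Nat.Prime, Real.log p ≤ N * Real.log 4 := by
  have hfe : (Icc 1 N).filter Nat.Prime = (range (N+1)).filter Nat.Prime := by
    ext p
    simp only [mem_filter, mem_Icc, mem_range]
    constructor
    · rintro ⟨⟨h1, h2⟩, hp⟩; exact ⟨by omega, hp⟩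
    · rintro ⟨h1, hp⟩; exact ⟨⟨hp.one_lt.le, by omega⟩, hp⟩
  have h1 : ∑ p ∈ (Icc 1 N).filter Nat.Prime, Real.log p = Real.log (primorial N) := by
    rw [hfe, primorial, Nat.cast_prod, Real.log_prod]
    intro p hp
    simp only [mem_filter] at hp
    exact_mod_cast hp.2.pos.ne'
  rw [h1]
  calc Real.log (primorial N) ≤ Real.log ((4:ℕ)^N : ℕ) := by
        apply Real.log_le_log (by exact_mod_cast primorial_pos N)
        exact_mod_cast primorial_le_4_pow N
    _ = N * Real.log 4 := by
        push_cast
        rw [Real.log_pow]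

lemma logfac_lower (N : ℕ) (hN : 1 ≤ N) :
    (N:ℝ) * Real.log N - N + 1 ≤ ∑ n ∈ Icc 1 N, Real.log n := by
  induction N with
  | zero => omega
  | succ m ih =>
    rcases Nat.eq_or_lt_of_le hN with h | h
    · simp [← h]
    have hm : 1 ≤ m := by omega
    have hm' : (1:ℝ) ≤ (m:ℝ) := by exact_mod_cast hm
    have hstep : ∑ n ∈ Icc 1 (m+1), Real.log n
        = (∑ n ∈ Icc 1 m, Real.log n) + Real.log ((m:ℝ)+1) := by
      rw [← Finset.Ico_add_one_right_eq_Icc, Finset.sum_Ico_succ_top (by omega), Finset.Ico_add_one_right_eq_Icc]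
      push_cast; ring
    have hlog : (m:ℝ) * (Real.log ((m:ℝ)+1) - Real.log m) ≤ 1 := by
      have h1 : Real.log (((m:ℝ)+1)/m) ≤ ((m:ℝ)+1)/m - 1 := Real.log_le_sub_one_of_pos (by positivity)
      rw [Real.log_div (by positivity) (by positivity)] at h1
      have h2 : ((m:ℝ)+1)/m - 1 = 1/m := by field_simp; ring
      rw [h2] at h1
      calc (m:ℝ) * (Real.log ((m:ℝ)+1) - Real.log m) ≤ (m:ℝ) * (1/m) :=
            mul_le_mul_of_nonneg_left h1 (by positivity)
        _ = 1 := by field_simp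
    have hih := ih hm
    rw [hstep]
    push_cast
    nlinarith [hlog, hih]

lemma logfac_upper (N : ℕ) : ∑ n ∈ Icc 1 N, Real.log n ≤ N * Real.log N := by
  calc ∑ n ∈ Icc 1 N, Real.log n ≤ ∑ n ∈ Icc 1 N, Real.log N := by
        apply Finset.sum_le_sum
        intro n hn
        simp only [mem_Icc] at hn
        exact Real.log_le_log (by exact_mod_cast hn.1) (by exact_mod_cast hn.2)
    _ = N * Real.log N := by rw [Finset.sum_const, Nat.card_Icc]; simp

lemma key_id (N : ℕ) :
    ∑ n ∈ Icc 1 N, Real.log n = ∑ d ∈ Icc 1 N, Λ d * ((N / d : ℕ) : ℝ) := by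
  have h1 : ∀ n ∈ Icc 1 N, Real.log n = ∑ d ∈ Icc 1 N, if d ∣ n then Λ d else 0 := by
    intro n hn
    simp only [mem_Icc] at hn
    rw [← vonMangoldt_sum (n := n), ← Finset.sum_filter]
    congr 1
    ext d
    simp only [Nat.mem_divisors, mem_filter, mem_Icc]
    constructor
    · rintro ⟨hd, hn0⟩
      exact ⟨⟨Nat.one_le_iff_ne_zero.mpr (fun h => by simp [h] at hd; omega),
        (Nat.le_of_dvd (by omega) hd).trans hn.2⟩, hd⟩
    · rintro ⟨_, hd⟩
      exact ⟨hd, by omega⟩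
  rw [Finset.sum_congr rfl h1, Finset.sum_comm]
  apply Finset.sum_congr rfl
  intro d hd
  rw [← Finset.sum_filter, Finset.sum_const, nsmul_eq_mul, mul_comm]
  congr 2
  have : Icc 1 N = Ioc 0 N := by rw [← Finset.Icc_add_one_left_eq_Ioc]; rfl
  rw [this]
  exact Nat.Ioc_filter_dvd_card_eq_div N d

lemma log_le_two_sqrt {m : ℕ} (hm : 1 ≤ m) : Real.log m ≤ 2 * Real.sqrt m := by
  have h0 : (0:ℝ) < m := by exact_mod_cast hm
  have h1 : Real.log m = 2 * Real.log (Real.sqrt m) := by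
    rw [Real.log_sqrt h0.le]; ring
  rw [h1]
  have := Real.log_le_sub_one_of_pos (Real.sqrt_pos.mpr h0)
  nlinarith [this]

lemma sqrt_telescope' (N : ℕ) (hN : 1 ≤ N) :
    ∑ m ∈ Icc 2 N, 1 / ((m:ℝ) * Real.sqrt m) ≤ 2 - 2 / Real.sqrt N := by
  induction N with
  | zero => omega
  | succ n ih =>
    rcases Nat.lt_or_ge n 1 with h | h
    · interval_cases n
      norm_num
    rw [← Finset.Ico_add_one_right_eq_Icc, Finset.sum_Ico_succ_top (by omega), Finset.Ico_add_one_right_eq_Icc]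
    have key : 1 / ((((n:ℕ)+1:ℕ):ℝ) * Real.sqrt (((n:ℕ)+1:ℕ))) ≤
        2 / Real.sqrt n - 2 / Real.sqrt (((n:ℕ)+1:ℕ)) := by
      push_cast
      set a := Real.sqrt (n:ℝ) with ha
      set b := Real.sqrt ((n:ℝ)+1) with hb
      have ha2 : a^2 = n := Real.sq_sqrt (by positivity)
      have hb2 : b^2 = (n:ℝ)+1 := Real.sq_sqrt (by positivity)
      have hapos : 0 < a := Real.sqrt_pos.mpr (by exact_mod_cast h)
      have hbpos : 0 < b := Real.sqrt_pos.mpr (by positivity)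
      have hab : a ≤ b := Real.sqrt_le_sqrt (by linarith [Nat.cast_nonneg n (α := ℝ)])
      rw [div_sub_div _ _ (ne_of_gt hapos) (ne_of_gt hbpos),
        div_le_div_iff₀ (by nlinarith) (by positivity)]
      have h1 : (b - a) * (a + b) = 1 := by nlinarith
      nlinarith [mul_pos hapos hbpos, sq_nonneg (a - b), mul_pos (mul_pos hapos hbpos) hbpos]
    have := ih h
    push_cast at key ⊢
    linarith

lemma sqrt_telescope (N : ℕ) : ∑ m ∈ Icc 2 N, 1 / ((m:ℝ) * Real.sqrt m) ≤ 2 := by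
  rcases Nat.lt_or_ge N 1 with h | h
  · interval_cases N; simp
  have h2 : 0 < Real.sqrt N := Real.sqrt_pos.mpr (by exact_mod_cast h)
  have := sqrt_telescope' N h
  have : 2 / Real.sqrt N > 0 := by positivity
  linarith [sqrt_telescope' N h]

lemma sum_log_div_sq (N : ℕ) : ∑ m ∈ Icc 2 N, Real.log m / (m:ℝ)^2 ≤ 4 := by
  calc ∑ m ∈ Icc 2 N, Real.log m / (m:ℝ)^2
      ≤ ∑ m ∈ Icc 2 N, 2 * (1 / ((m:ℝ) * Real.sqrt m)) := by
        apply Finset.sum_le_sum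
        intro m hm
        simp only [mem_Icc] at hm
        have hm1 : (1:ℝ) ≤ m := by exact_mod_cast hm.1.trans' (by norm_num)
        have hs : 0 < Real.sqrt m := Real.sqrt_pos.mpr (by linarith)
        have hmpos : (0:ℝ) < m := by linarith
        rw [div_le_iff₀ (by positivity)]
        have hlog := log_le_two_sqrt (m := m) (by omega)
        have hss : Real.sqrt m * Real.sqrt m = m := Real.mul_self_sqrt hmpos.le
        have : 2 * (1 / ((m:ℝ) * Real.sqrt m)) * (m:ℝ)^2 = 2 * Real.sqrt m := by
          field_simp
          nlinarith [hss]
        rw [this]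
        exact hlog
    _ = 2 * ∑ m ∈ Icc 2 N, 1 / ((m:ℝ) * Real.sqrt m) := by rw [Finset.mul_sum]
    _ ≤ 2 * 2 := by linarith [sqrt_telescope N]
    _ = 4 := by norm_num

lemma geom_tail {p : ℕ} (hp : 2 ≤ p) (N : ℕ) :
    ∑ k ∈ Icc 2 N, (1/(p:ℝ))^k ≤ 2/(p:ℝ)^2 := by
  have hp0 : (0:ℝ) < p := by exact_mod_cast Nat.lt_of_lt_of_le (by norm_num) hp
  have hx0 : (0:ℝ) ≤ 1/(p:ℝ) := by positivity
  have hx : (1:ℝ)/(p:ℝ) ≤ 1/2 := by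
    apply div_le_div_of_nonneg_left (by norm_num) (by norm_num)
    exact_mod_cast hp
  rw [show Icc 2 N = Ico 2 (N+1) by rw [Finset.Ico_add_one_right_eq_Icc], Finset.sum_Ico_eq_sum_range]
  have : ∀ i, (1/(p:ℝ))^(2+i) = (1/(p:ℝ)^2) * (1/(p:ℝ))^i := by
    intro i; rw [pow_add]; ring
  simp_rw [this]
  rw [← Finset.mul_sum]
  have hgeom : ∑ i ∈ range (N + 1 - 2), (1/(p:ℝ))^i ≤ 2 := by
    calc ∑ i ∈ range (N + 1 - 2), (1/(p:ℝ))^i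
        ≤ ∑ i ∈ range (N + 1 - 2), (1/(2:ℝ))^i :=
          Finset.sum_le_sum (fun i _ => pow_le_pow_left₀ hx0 hx i)
      _ = ((1/(2:ℝ))^(N+1-2) - 1)/(1/2 - 1) := geom_sum_eq (by norm_num) _
      _ ≤ 2 := by
          have : (0:ℝ) ≤ (1/(2:ℝ))^(N+1-2) := by positivity
          rw [div_le_iff_of_neg (by norm_num)]
          linarith
  calc (1/(p:ℝ)^2) * ∑ i ∈ range (N + 1 - 2), (1/(p:ℝ))^i ≤ (1/(p:ℝ)^2) * 2 := by
        apply mul_le_mul_of_nonneg_left hgeom (by positivity)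
    _ = 2/(p:ℝ)^2 := by ring


lemma tail_bound (N : ℕ) :
    ∑ d ∈ (Icc 1 N).filter (fun d => ¬ d.Prime), Λ d / d ≤ 8 := by
  set T : Finset (ℕ × ℕ) := ((Icc 2 N).filter Nat.Prime) ×ˢ (Icc 2 N) with hT
  set f : ℕ × ℕ → ℕ := fun q => q.1 ^ q.2 with hf
  set S'' := (Icc 1 N).filter (fun d => ¬ d.Prime ∧ IsPrimePow d) with hS
  have step1 : ∑ d ∈ (Icc 1 N).filter (fun d => ¬ d.Prime), Λ d / d
      = ∑ d ∈ S'', Λ d / d := by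
    apply (Finset.sum_subset ?_ ?_).symm
    · intro d hd
      simp only [hS, mem_filter] at hd ⊢
      exact ⟨hd.1, hd.2.1⟩
    · intro d hd hnd
      simp only [hS, mem_filter] at hd hnd
      have : ¬ IsPrimePow d := by tauto
      rw [vonMangoldt_eq_zero_iff.mpr this, zero_div]
  have hinj : Set.InjOn f T := by
    intro a ha b hb heq
    simp only [Finset.mem_coe, hT, mem_product, mem_filter, mem_Icc] at ha hb
    obtain ⟨⟨⟨hp2, hpN⟩, hp⟩, hk2, hkN⟩ := ha
    obtain ⟨⟨⟨hq2, hqN⟩, hq⟩, hl2, hlN⟩ := hb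
    simp only [hf] at heq
    have hpq : a.1 = b.1 := by
      have h1 : a.1 ∣ b.1 ^ b.2 := heq ▸ dvd_pow_self a.1 (by omega)
      exact (Nat.prime_dvd_prime_iff_eq hp hq).mp (hp.dvd_of_dvd_pow h1)
    have hkl : a.2 = b.2 := Nat.pow_right_injective hp.two_le (hpq ▸ heq)
    exact Prod.ext hpq hkl
  have step2 : S'' ⊆ T.image f := by
    intro d hd
    simp only [hS, mem_filter, mem_Icc] at hd
    obtain ⟨⟨hd1, hdN⟩, hnp, hpp⟩ := hd
    obtain ⟨p, k, hp, hk, rfl⟩ := hpp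
    have hpn : p.Prime := hp.nat_prime
    have hk2 : 2 ≤ k := by
      rcases Nat.lt_or_ge k 2 with h | h
      · have hk1 : k = 1 := by omega
        subst hk1
        simp only [pow_one] at hnp
        exact absurd hpn hnp
      · exact h
    have hpN' : p ≤ N := le_trans (Nat.le_self_pow (by omega) p) hdN
    have hkN : k ≤ N := by
      have h1 : 2^k ≤ p^k := Nat.pow_le_pow_left hpn.two_le k
      have h2 : k < 2^k := Nat.lt_two_pow_self
      omega
    refine Finset.mem_image.mpr ⟨(p, k), ?_, rfl⟩
    simp only [hT, mem_product, mem_filter, mem_Icc]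
    exact ⟨⟨⟨hpn.two_le, hpN'⟩, hpn⟩, hk2, hkN⟩
  have step3 : ∑ d ∈ S'', Λ d / d ≤ ∑ d ∈ T.image f, Λ d / d := by
    apply Finset.sum_le_sum_of_subset_of_nonneg step2
    intro d _ _
    exact div_nonneg vonMangoldt_nonneg (Nat.cast_nonneg _)
  have step4 : ∑ d ∈ T.image f, Λ d / d = ∑ q ∈ T, Λ (f q) / (f q) := Finset.sum_image hinj
  have step5 : ∑ q ∈ T, Λ (f q) / (f q)
      = ∑ p ∈ (Icc 2 N).filter Nat.Prime, ∑ k ∈ Icc 2 N, Λ (p^k) / ((p:ℝ)^k) := by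
    rw [hT, Finset.sum_product]
    apply Finset.sum_congr rfl; intro p _
    apply Finset.sum_congr rfl; intro k _
    simp [hf]
  have step6 : ∀ p ∈ (Icc 2 N).filter Nat.Prime,
      ∑ k ∈ Icc 2 N, Λ (p^k) / ((p:ℝ)^k) ≤ 2 * (Real.log p / (p:ℝ)^2) := by
    intro p hp
    simp only [mem_filter, mem_Icc] at hp
    have hprime := hp.2
    have hcalc : ∀ k ∈ Icc 2 N, Λ (p^k) / ((p:ℝ)^k) = Real.log p * (1/(p:ℝ))^k := by
      intro k hk
      simp only [mem_Icc] at hk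
      rw [vonMangoldt_apply_pow (by omega), vonMangoldt_apply_prime hprime]
      rw [div_pow, one_pow]
      ring
    rw [Finset.sum_congr rfl hcalc, ← Finset.mul_sum]
    have hlogp : 0 ≤ Real.log p := Real.log_nonneg (by exact_mod_cast hprime.one_lt.le)
    calc Real.log p * ∑ k ∈ Icc 2 N, (1/(p:ℝ))^k ≤ Real.log p * (2/(p:ℝ)^2) :=
          mul_le_mul_of_nonneg_left (geom_tail hprime.two_le N) hlogp
      _ = 2 * (Real.log p / (p:ℝ)^2) := by ring
  calc ∑ d ∈ (Icc 1 N).filter (fun d => ¬ d.Prime), Λ d / d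
      = ∑ d ∈ S'', Λ d / d := step1
    _ ≤ ∑ q ∈ T, Λ (f q) / (f q) := step4 ▸ step3
    _ = ∑ p ∈ (Icc 2 N).filter Nat.Prime, ∑ k ∈ Icc 2 N, Λ (p^k) / ((p:ℝ)^k) := step5
    _ ≤ ∑ p ∈ (Icc 2 N).filter Nat.Prime, 2 * (Real.log p / (p:ℝ)^2) :=
        Finset.sum_le_sum step6
    _ ≤ ∑ m ∈ Icc 2 N, 2 * (Real.log m / (m:ℝ)^2) := by
        apply Finset.sum_le_sum_of_subset_of_nonneg (filter_subset _ _)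
        intro m hm _
        simp only [mem_Icc] at hm
        have : 0 ≤ Real.log m := Real.log_nonneg (by exact_mod_cast Nat.one_le_of_lt hm.1)
        positivity
    _ = 2 * ∑ m ∈ Icc 2 N, Real.log m / (m:ℝ)^2 := by rw [Finset.mul_sum]
    _ ≤ 2 * 4 := by linarith [sum_log_div_sq N]
    _ = 8 := by norm_num

lemma mertens_upper (N : ℕ) (hN : 1 ≤ N) :
    ∑ p ∈ (Icc 1 N).filter Nat.Prime, Real.log p / p ≤ Real.log N + Real.log 4 := by
  have hN' : (0:ℝ) < N := by exact_mod_cast hN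
  have h1 : ∑ d ∈ (Icc 1 N).filter Nat.Prime, Λ d * ((N / d : ℕ) : ℝ)
      ≤ ∑ n ∈ Icc 1 N, Real.log n := by
    rw [key_id]
    apply Finset.sum_le_sum_of_subset_of_nonneg (filter_subset _ _)
    intro i _ _
    exact mul_nonneg vonMangoldt_nonneg (Nat.cast_nonneg _)
  have h2 : ∀ p ∈ (Icc 1 N).filter Nat.Prime,
      Real.log p * ((N:ℝ)/p) - Real.log p ≤ Λ p * ((N / p : ℕ) : ℝ) := by
    intro p hp
    simp only [mem_filter, mem_Icc] at hp
    have hprime := hp.2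
    have hppos : (0:ℝ) < p := by exact_mod_cast hprime.pos
    have hlogp : 0 ≤ Real.log p := Real.log_nonneg (by exact_mod_cast hprime.one_lt.le)
    rw [vonMangoldt_apply_prime hprime]
    have hfloor : (N:ℝ)/p - 1 ≤ ((N / p : ℕ) : ℝ) := by
      have hmod := Nat.div_add_mod N p
      have hlt : N % p < p := Nat.mod_lt N hprime.pos
      have : (N:ℝ) < p * ((N / p : ℕ) : ℝ) + p := by
        have : (N:ℝ) = p * ((N / p : ℕ) : ℝ) + ((N % p : ℕ) : ℝ) := by exact_mod_cast hmod.symm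
        rw [this]
        have : ((N % p : ℕ) : ℝ) < p := by exact_mod_cast hlt
        linarith
      rw [div_sub_one (ne_of_gt hppos), div_le_iff₀ hppos]
      nlinarith
    nlinarith
  have h3 : ∑ p ∈ (Icc 1 N).filter Nat.Prime, (Real.log p * ((N:ℝ)/p) - Real.log p)
      ≤ N * Real.log N := by
    calc _ ≤ ∑ p ∈ (Icc 1 N).filter Nat.Prime, Λ p * ((N / p : ℕ) : ℝ) := Finset.sum_le_sum h2
      _ ≤ ∑ n ∈ Icc 1 N, Real.log n := h1
      _ ≤ N * Real.log N := logfac_upper N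
  have h4 : ∑ p ∈ (Icc 1 N).filter Nat.Prime, (Real.log p * ((N:ℝ)/p) - Real.log p)
      = (N:ℝ) * ∑ p ∈ (Icc 1 N).filter Nat.Prime, Real.log p / p
        - ∑ p ∈ (Icc 1 N).filter Nat.Prime, Real.log p := by
    rw [Finset.sum_sub_distrib, Finset.mul_sum]
    congr 1
    apply Finset.sum_congr rfl
    intro p _
    ring
  rw [h4] at h3
  have h5 := theta_le' N
  rw [← mul_le_mul_iff_right₀ hN' (b := _), mul_add]
  nlinarith

lemma mertens_lower (N : ℕ) (hN : 1 ≤ N) :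
    Real.log N - 9 ≤ ∑ p ∈ (Icc 1 N).filter Nat.Prime, Real.log p / p := by
  have hN' : (0:ℝ) < N := by exact_mod_cast hN
  have h1 : ∑ n ∈ Icc 1 N, Real.log n ≤ (N:ℝ) * ∑ d ∈ Icc 1 N, Λ d / d := by
    rw [key_id, Finset.mul_sum]
    apply Finset.sum_le_sum
    intro d hd
    simp only [mem_Icc] at hd
    have hd' : (0:ℝ) < d := by exact_mod_cast hd.1
    have : ((N / d : ℕ) : ℝ) ≤ (N:ℝ)/d := Nat.cast_div_le
    calc Λ d * ((N / d : ℕ) : ℝ) ≤ Λ d * ((N:ℝ)/d) :=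
          mul_le_mul_of_nonneg_left this vonMangoldt_nonneg
      _ = (N:ℝ) * (Λ d / d) := by ring
  have h2 : ∑ d ∈ Icc 1 N, Λ d / d
      = (∑ p ∈ (Icc 1 N).filter Nat.Prime, Λ p / p)
        + ∑ d ∈ (Icc 1 N).filter (fun d => ¬ d.Prime), Λ d / d := by
    exact (Finset.sum_filter_add_sum_filter_not _ _ _).symm
  have h3 : ∑ p ∈ (Icc 1 N).filter Nat.Prime, Λ p / p
      = ∑ p ∈ (Icc 1 N).filter Nat.Prime, Real.log p / p := by
    apply Finset.sum_congr rfl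
    intro p hp
    simp only [mem_filter] at hp
    rw [vonMangoldt_apply_prime hp.2]
  have h4 := tail_bound N
  have h5 := logfac_lower N hN
  have h6 : (N:ℝ) * Real.log N - N + 1 ≤
      (N:ℝ) * ((∑ p ∈ (Icc 1 N).filter Nat.Prime, Real.log p / p) + 8) := by
    calc (N:ℝ) * Real.log N - N + 1 ≤ ∑ n ∈ Icc 1 N, Real.log n := h5
      _ ≤ (N:ℝ) * ∑ d ∈ Icc 1 N, Λ d / d := h1
      _ ≤ _ := by
          rw [h2, h3]
          apply mul_le_mul_of_nonneg_left (by linarith) hN'.le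
  nlinarith

lemma inner_lower {p N : ℕ} (hp : 1 ≤ p) (hpN : p ≤ N) :
    1/(p:ℝ) - 1/(N:ℝ) ≤ ∑ n ∈ Icc p N, 1/(n:ℝ)^2 := by
  have hppos : (0:ℝ) < p := by exact_mod_cast hp
  have hNpos : (0:ℝ) < N := by exact_mod_cast lt_of_lt_of_le (show 0 < p by omega) hpN
  have hsum : ∑ n ∈ Icc p N, 1/(n:ℝ)^2 = ∑ i ∈ range (N+1-p), 1/(((p+i:ℕ)):ℝ)^2 := by
    rw [← Finset.Ico_add_one_right_eq_Icc, Finset.sum_Ico_eq_sum_range]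
  have htel : ∑ i ∈ range (N+1-p), (1/(((p+i:ℕ)):ℝ) - 1/(((p+(i+1):ℕ)):ℝ))
      = 1/(((p+0:ℕ)):ℝ) - 1/(((p+(N+1-p):ℕ)):ℝ) :=
    Finset.sum_range_sub' (f := fun i => 1/(((p+i:ℕ)):ℝ)) _
  have hterm : ∀ i ∈ range (N+1-p),
      1/(((p+i:ℕ)):ℝ) - 1/(((p+(i+1):ℕ)):ℝ) ≤ 1/(((p+i:ℕ)):ℝ)^2 := by
    intro i _
    have hx : (1:ℝ) ≤ ((p+i:ℕ):ℝ) := by exact_mod_cast (by omega : 1 ≤ p + i)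
    set x : ℝ := ((p+i:ℕ):ℝ) with hxdef
    have hx0 : (0:ℝ) < x := by linarith
    have hcast : (((p+(i+1):ℕ)):ℝ) = x + 1 := by push_cast [hxdef]; ring
    rw [hcast, div_sub_div _ _ (ne_of_gt hx0) (by positivity)]
    have : (1:ℝ) * (x+1) - x * 1 = 1 := by ring
    rw [this]
    apply div_le_div_of_nonneg_left (by norm_num) (by positivity)
    nlinarith
  have hend : (((p+(N+1-p):ℕ)):ℝ) = ((N:ℝ)+1) := by
    have : p+(N+1-p) = N+1 := by omega
    rw [this]; push_cast; ring
  have h1 : 1/(p:ℝ) - 1/((N:ℝ)+1) ≤ ∑ i ∈ range (N+1-p), 1/(((p+i:ℕ)):ℝ)^2 := by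
    calc 1/(p:ℝ) - 1/((N:ℝ)+1) = 1/(((p+0:ℕ)):ℝ) - 1/(((p+(N+1-p):ℕ)):ℝ) := by
          rw [hend]; norm_num
      _ = ∑ i ∈ range (N+1-p), (1/(((p+i:ℕ)):ℝ) - 1/(((p+(i+1):ℕ)):ℝ)) := htel.symm
      _ ≤ _ := Finset.sum_le_sum hterm
  have h2 : 1/((N:ℝ)+1) ≤ 1/(N:ℝ) := by
    apply div_le_div_of_nonneg_left (by norm_num) hNpos
    linarith
  rw [hsum]
  linarith

lemma inner_upper {p N : ℕ} (hp : 1 ≤ p) :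
    ∑ n ∈ Icc p N, 1/(n:ℝ)^2 ≤ 1/(p:ℝ) + 1/(p:ℝ)^2 := by
  have hppos : (0:ℝ) < p := by exact_mod_cast hp
  rcases Nat.lt_or_ge N p with h | h
  · rw [Finset.Icc_eq_empty (by omega)]
    simp only [Finset.sum_empty]
    positivity
  have hins : Icc p N = insert p (Ioc p N) := (Finset.Ioc_insert_left h).symm
  have hnotmem : p ∉ Ioc p N := by simp
  rw [hins, Finset.sum_insert hnotmem]
  have htail : ∑ n ∈ Ioc p N, 1/(n:ℝ)^2 ≤ 1/(p:ℝ) := by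
    have hIoc : Ioc p N = Ico (p+1) (N+1) := by
      rw [← Finset.Icc_add_one_left_eq_Ioc, Finset.Ico_add_one_right_eq_Icc]
    rw [hIoc, Finset.sum_Ico_eq_sum_range]
    have htel : ∑ i ∈ range (N+1-(p+1)), (1/(((p+i:ℕ)):ℝ) - 1/(((p+(i+1):ℕ)):ℝ))
        = 1/(((p+0:ℕ)):ℝ) - 1/(((p+(N+1-(p+1)):ℕ)):ℝ) :=
      Finset.sum_range_sub' (f := fun i => 1/(((p+i:ℕ)):ℝ)) _
    have hterm : ∀ i ∈ range (N+1-(p+1)),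
        1/(((p+1+i:ℕ)):ℝ)^2 ≤ 1/(((p+i:ℕ)):ℝ) - 1/(((p+(i+1):ℕ)):ℝ) := by
      intro i _
      set x : ℝ := ((p+i:ℕ):ℝ) with hxdef
      have hx : (1:ℝ) ≤ x := by
        rw [hxdef]; exact_mod_cast (by omega : 1 ≤ p + i)
      have hx0 : (0:ℝ) < x := by linarith
      have hcast : (((p+(i+1):ℕ)):ℝ) = x + 1 := by push_cast [hxdef]; ring
      have hcast2 : (((p+1+i:ℕ)):ℝ) = x + 1 := by push_cast [hxdef]; ring
      rw [hcast, hcast2, div_sub_div _ _ (ne_of_gt hx0) (by positivity)]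
      have : (1:ℝ) * (x+1) - x * 1 = 1 := by ring
      rw [this]
      apply div_le_div_of_nonneg_left (by norm_num) (by positivity)
      nlinarith
    calc ∑ i ∈ range (N+1-(p+1)), 1/(((p+1+i:ℕ)):ℝ)^2
        ≤ ∑ i ∈ range (N+1-(p+1)), (1/(((p+i:ℕ)):ℝ) - 1/(((p+(i+1):ℕ)):ℝ)) :=
          Finset.sum_le_sum hterm
      _ = 1/(((p+0:ℕ)):ℝ) - 1/(((p+(N+1-(p+1)):ℕ)):ℝ) := htel
      _ ≤ 1/(((p+0:ℕ)):ℝ) := by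
          have : (0:ℝ) < ((p+(N+1-(p+1)):ℕ):ℝ) := by
            have : 1 ≤ p+(N+1-(p+1)) := by omega
            exact_mod_cast this.trans_lt' (by norm_num)
          have h0 : (0:ℝ) ≤ 1/((p+(N+1-(p+1)):ℕ):ℝ) := by positivity
          linarith
      _ = 1/(p:ℝ) := by norm_num
  linarith

lemma swap_sum (N : ℕ) :
    ∑ n ∈ Icc 1 N, cheTheta n / (n:ℝ)^2
      = ∑ p ∈ (Icc 1 N).filter Nat.Prime, Real.log p * ∑ n ∈ Icc p N, 1/(n:ℝ)^2 := by
  have hche : ∀ n : ℕ, cheTheta n = ∑ p ∈ (Icc 1 n).filter Nat.Prime, Real.log p := by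
    intro n
    unfold cheTheta primesUpTo
    rw [Nat.floor_natCast]
  calc ∑ n ∈ Icc 1 N, cheTheta n / (n:ℝ)^2
      = ∑ n ∈ Icc 1 N, ∑ p ∈ (Icc 1 N).filter Nat.Prime,
          (if p ≤ n then Real.log p / (n:ℝ)^2 else 0) := by
        apply Finset.sum_congr rfl
        intro n hn
        simp only [mem_Icc] at hn
        rw [hche, Finset.sum_div, ← Finset.sum_filter]
        apply Finset.sum_congr ?_ (fun _ _ => rfl)
        ext p
        simp only [mem_filter, mem_Icc]
        constructor
        · rintro ⟨⟨h1, h2⟩, hpr⟩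
          exact ⟨⟨⟨h1, h2.trans hn.2⟩, hpr⟩, h2⟩
        · rintro ⟨⟨⟨h1, _⟩, hpr⟩, h3⟩
          exact ⟨⟨h1, h3⟩, hpr⟩
    _ = ∑ p ∈ (Icc 1 N).filter Nat.Prime, ∑ n ∈ Icc 1 N,
          (if p ≤ n then Real.log p / (n:ℝ)^2 else 0) := Finset.sum_comm
    _ = ∑ p ∈ (Icc 1 N).filter Nat.Prime, Real.log p * ∑ n ∈ Icc p N, 1/(n:ℝ)^2 := by
        apply Finset.sum_congr rfl
        intro p hp
        simp only [mem_filter, mem_Icc] at hp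
        rw [← Finset.sum_filter]
        have hfe : (Icc 1 N).filter (fun n => p ≤ n) = Icc p N := by
          ext n
          simp only [mem_filter, mem_Icc]
          omega
        rw [hfe, Finset.mul_sum]
        exact Finset.sum_congr rfl (fun n _ => (mul_one_div _ _).symm)

theorem stmt_19 :
    ∃ C : ℝ, ∀ x : ℝ, 1 ≤ x →
      |∑ n ∈ Finset.Icc 1 ⌊x⌋₊, (cheTheta n - n) / (n : ℝ) ^ 2| ≤ C := by
  use 10 + Real.log 4
  intro x hx
  set N := ⌊x⌋₊ with hNdef
  have hN1 : 1 ≤ N := Nat.le_floor (by exact_mod_cast hx)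
  have hNpos : (0:ℝ) < N := by exact_mod_cast hN1
  have hlog4 : (0:ℝ) ≤ Real.log 4 := Real.log_nonneg (by norm_num)
  -- split the sum
  have hsplit : ∑ n ∈ Icc 1 N, (cheTheta n - n) / (n:ℝ)^2
      = (∑ n ∈ Icc 1 N, cheTheta n / (n:ℝ)^2) - ∑ n ∈ Icc 1 N, 1/(n:ℝ) := by
    rw [← Finset.sum_sub_distrib]
    apply Finset.sum_congr rfl
    intro n hn
    simp only [mem_Icc] at hn
    have hn0 : (0:ℝ) < n := by exact_mod_cast hn.1
    field_simp
  set M := ∑ p ∈ (Icc 1 N).filter Nat.Prime, Real.log p / p with hM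
  -- upper bound on T
  have hTupper : ∑ n ∈ Icc 1 N, cheTheta n / (n:ℝ)^2 ≤ M + 4 := by
    rw [swap_sum]
    have h1 : ∀ p ∈ (Icc 1 N).filter Nat.Prime,
        Real.log p * ∑ n ∈ Icc p N, 1/(n:ℝ)^2 ≤ Real.log p / p + Real.log p / (p:ℝ)^2 := by
      intro p hp
      simp only [mem_filter, mem_Icc] at hp
      have hlogp : 0 ≤ Real.log p := Real.log_nonneg (by exact_mod_cast hp.2.one_lt.le)
      calc Real.log p * ∑ n ∈ Icc p N, 1/(n:ℝ)^2
          ≤ Real.log p * (1/(p:ℝ) + 1/(p:ℝ)^2) :=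
            mul_le_mul_of_nonneg_left (inner_upper hp.1.1) hlogp
        _ = Real.log p / p + Real.log p / (p:ℝ)^2 := by ring
    calc ∑ p ∈ (Icc 1 N).filter Nat.Prime, Real.log p * ∑ n ∈ Icc p N, 1/(n:ℝ)^2
        ≤ ∑ p ∈ (Icc 1 N).filter Nat.Prime, (Real.log p / p + Real.log p / (p:ℝ)^2) :=
          Finset.sum_le_sum h1
      _ = M + ∑ p ∈ (Icc 1 N).filter Nat.Prime, Real.log p / (p:ℝ)^2 := by
          rw [Finset.sum_add_distrib]
      _ ≤ M + 4 := by
          have hsub : (Icc 1 N).filter Nat.Prime ⊆ Icc 2 N := by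
            intro p hp
            simp only [mem_filter, mem_Icc] at hp ⊢
            exact ⟨hp.2.two_le, hp.1.2⟩
          have : ∑ p ∈ (Icc 1 N).filter Nat.Prime, Real.log p / (p:ℝ)^2
              ≤ ∑ m ∈ Icc 2 N, Real.log m / (m:ℝ)^2 := by
            apply Finset.sum_le_sum_of_subset_of_nonneg hsub
            intro m hm _
            simp only [mem_Icc] at hm
            have : 0 ≤ Real.log m := Real.log_nonneg (by exact_mod_cast Nat.one_le_of_lt hm.1)
            positivity
          linarith [sum_log_div_sq N]
  -- lower bound on T
  have hTlower : M - Real.log 4 ≤ ∑ n ∈ Icc 1 N, cheTheta n / (n:ℝ)^2 := by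
    rw [swap_sum]
    have h1 : ∀ p ∈ (Icc 1 N).filter Nat.Prime,
        Real.log p / p - Real.log p * (1/(N:ℝ)) ≤ Real.log p * ∑ n ∈ Icc p N, 1/(n:ℝ)^2 := by
      intro p hp
      simp only [mem_filter, mem_Icc] at hp
      have hlogp : 0 ≤ Real.log p := Real.log_nonneg (by exact_mod_cast hp.2.one_lt.le)
      calc Real.log p / p - Real.log p * (1/(N:ℝ))
          = Real.log p * (1/(p:ℝ) - 1/(N:ℝ)) := by ring
        _ ≤ Real.log p * ∑ n ∈ Icc p N, 1/(n:ℝ)^2 :=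
            mul_le_mul_of_nonneg_left (inner_lower hp.1.1 hp.1.2) hlogp
    have h2 : ∑ p ∈ (Icc 1 N).filter Nat.Prime, (Real.log p / p - Real.log p * (1/(N:ℝ)))
        = M - (∑ p ∈ (Icc 1 N).filter Nat.Prime, Real.log p) * (1/(N:ℝ)) := by
      rw [Finset.sum_sub_distrib, Finset.sum_mul]
    have h3 : (∑ p ∈ (Icc 1 N).filter Nat.Prime, Real.log p) * (1/(N:ℝ)) ≤ Real.log 4 := by
      calc (∑ p ∈ (Icc 1 N).filter Nat.Prime, Real.log p) * (1/(N:ℝ))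
          ≤ ((N:ℝ) * Real.log 4) * (1/(N:ℝ)) := by
            apply mul_le_mul_of_nonneg_right (theta_le' N) (by positivity)
        _ = Real.log 4 := by field_simp
    calc M - Real.log 4 ≤ M - (∑ p ∈ (Icc 1 N).filter Nat.Prime, Real.log p) * (1/(N:ℝ)) := by
          linarith
      _ = ∑ p ∈ (Icc 1 N).filter Nat.Prime, (Real.log p / p - Real.log p * (1/(N:ℝ))) := h2.symm
      _ ≤ _ := Finset.sum_le_sum h1
  -- harmonic bounds
  have hHeq : ∑ n ∈ Icc 1 N, 1/(n:ℝ) = (harmonic N : ℝ) := by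
    rw [harmonic_eq_sum_Icc]
    push_cast
    apply Finset.sum_congr rfl
    intro n _
    rw [one_div]
  have hHlower : Real.log N ≤ ∑ n ∈ Icc 1 N, 1/(n:ℝ) := by
    rw [hHeq]
    calc Real.log N ≤ Real.log (N+1) := Real.log_le_log hNpos (by linarith)
      _ ≤ (harmonic N : ℝ) := by exact_mod_cast log_add_one_le_harmonic N
  have hHupper : ∑ n ∈ Icc 1 N, 1/(n:ℝ) ≤ 1 + Real.log N := by
    rw [hHeq]
    exact harmonic_le_one_add_log N
  have hMu := mertens_upper N hN1
  have hMl := mertens_lower N hN1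
  rw [hsplit]
  rw [abs_le]
  constructor
  · linarith
  · linarith
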